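/- arXiv:1111.7172 — 2 statements merged into one kernel-verified Lean document; each statement's English description precedes it below -/
import Mathlib

section
/- Let d ≥ 3 and n ≥ 2 be integers, let ≺' be an arbitrary total order on T_γ, and let w ∈ G(d,d,n) with w ≤_T γ and ℓ_T(w) ≥ 1. Then the lexicographically smallest (with respect to ≺' applied componentwise) reduced T-word for w is strictly increasing with respect to ≺'. (Every letter of a reduced T-word for w lies in T_γ, and the reduced T-words for w are exactly the label sequences, under the natural labeling (u,v) ↦ u⁻¹v, of the maximal chains of the interval [ε,w] of NC_{G(d,d,n)}(γ).) -/
open Matrix Complex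

/-- The primitive `d`-th root of unity `ζ_d = exp(2πi/d)`. -/
noncomputable def zetaC (d : ℕ) : ℂ := Complex.exp (2 * (Real.pi : ℂ) * Complex.I / (d : ℂ))

/-- The ambient group of invertible `n × n` complex matrices. -/
abbrev GLn (n : ℕ) := GL (Fin n) ℂ

/-- Membership in `G(d,d,n)`: monomial matrices whose nonzero entries are `d`-th roots of
unity with product `1`. -/
def IsGdd (d n : ℕ) (w : GLn n) : Prop :=
  ∃ (σ : Equiv.Perm (Fin n)) (z : Fin n → ℂ),
    (∀ j, z j ^ d = 1) ∧ (∏ j, z j) = 1 ∧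
    ∀ k l : Fin n, (w : Matrix (Fin n) (Fin n) ℂ) k l = if k = σ l then z l else 0

/-- The fixed space `{x : ℂⁿ | w x = x}` of `w`. -/
noncomputable def fixSpace {n : ℕ} (w : GLn n) : Submodule ℂ (Fin n → ℂ) :=
  LinearMap.ker ((w : Matrix (Fin n) (Fin n) ℂ).mulVecLin - LinearMap.id)

/-- A reflection of `G(d,d,n)`: an element of the group of finite order whose fixed space
has dimension `n - 1`. -/
def IsGddRefl (d n : ℕ) (t : GLn n) : Prop :=
  IsGdd d n t ∧ IsOfFinOrder t ∧ Module.finrank ℂ (fixSpace t) = n - 1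

/-- The absolute (reflection) length `ℓ_T`. -/
noncomputable def ellT (d n : ℕ) (w : GLn n) : ℕ :=
  sInf {k | ∃ l : List (GLn n), l.length = k ∧ (∀ t ∈ l, IsGddRefl d n t) ∧ l.prod = w}

/-- The absolute order `u ≤_T v`. -/
def absLe (d n : ℕ) (u v : GLn n) : Prop :=
  ellT d n v = ellT d n u + ellT d n (u⁻¹ * v)

/-- The matrix of the Coxeter element `γ = [1⁰ 2⁰ … (n−1)⁰][n⁰]⁻¹`:
`γ e_i = e_{i+1}` for `1 ≤ i ≤ n−2` (1-based), `γ e_{n−1} = ζ_d e_1`, `γ e_n = ζ_d⁻¹ e_n`. -/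
noncomputable def gammaMat (d n : ℕ) : Matrix (Fin n) (Fin n) ℂ :=
  Matrix.of fun k l : Fin n =>
    if (l : ℕ) + 2 < n ∧ (k : ℕ) = (l : ℕ) + 1 then 1
    else if (l : ℕ) + 2 = n ∧ (k : ℕ) = 0 then zetaC d
    else if (l : ℕ) + 1 = n ∧ k = l then (zetaC d)⁻¹
    else 0

/-- The matrix of the reflection `((i⁰ jˢ))` (1-based indices `i < j`): it sends
`e_i ↦ ζ_dˢ e_j`, `e_j ↦ ζ_d⁻ˢ e_i` and fixes the other basis vectors. -/
noncomputable def reflMat (d n : ℕ) (i j s : ℕ) : Matrix (Fin n) (Fin n) ℂ :=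
  Matrix.of fun k l : Fin n =>
    if (l : ℕ) + 1 = i ∧ (k : ℕ) + 1 = j then zetaC d ^ s
    else if (l : ℕ) + 1 = j ∧ (k : ℕ) + 1 = i then (zetaC d ^ s)⁻¹
    else if k = l ∧ (k : ℕ) + 1 ≠ i ∧ (k : ℕ) + 1 ≠ j then 1
    else 0

/-- Reduced `T`-words for `w`. -/
def IsReducedTWord (d n : ℕ) (w : GLn n) (l : List (GLn n)) : Prop :=
  (∀ t ∈ l, IsGddRefl d n t) ∧ l.prod = w ∧ l.length = ellT d n w

/-- The set `T_γ` of reflections below `γ` in absolute order. -/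
def TgammaSet (d n : ℕ) (γ : GLn n) : Set (GLn n) :=
  {t : GLn n | IsGddRefl d n t ∧ absLe d n t γ}

/-- The list of (1-based) triples `(i, j, s)` indexing the reflections `((i⁰ jˢ))` of `T_γ`
in the order `≺`: first `((i⁰ j⁰))` with `1 ≤ i < j ≤ n−1` lexicographically, then for each
`i = 1, …, n−1` the block `((i⁰ n⁰)), ((i⁰ n^{d−1})), …, ((i⁰ n¹)),
((i⁰ (i+1)^{d−1})), …, ((i⁰ (n−1)^{d−1}))`. -/
def reflTriples (d n : ℕ) : List (ℕ × ℕ × ℕ) :=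
  ((List.range' 1 (n - 2)).flatMap fun i =>
    (List.range' (i + 1) (n - 1 - i)).map fun j => (i, j, 0)) ++
  ((List.range' 1 (n - 1)).flatMap fun i =>
    ((i, n, 0) :: ((List.range' 1 (d - 1)).map fun r => (i, n, d - r))) ++
    ((List.range' (i + 1) (n - 1 - i)).map fun j => (i, j, d - 1)))

/-- `a` occurs (strictly) before `b` in the list `l`. -/
def ListBefore {α : Type*} (l : List α) (a b : α) : Prop :=
  ∃ l1 l2 l3 : List α, l = l1 ++ a :: (l2 ++ b :: l3)

/-- The total order `≺` on `T_γ`. -/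
def precRel (d n : ℕ) (t t' : GLn n) : Prop :=
  ∃ p q : ℕ × ℕ × ℕ,
    (t : Matrix (Fin n) (Fin n) ℂ) = reflMat d n p.1 p.2.1 p.2.2 ∧
    (t' : Matrix (Fin n) (Fin n) ℂ) = reflMat d n q.1 q.2.1 q.2.2 ∧
    ListBefore (reflTriples d n) p q

section ELShellability

variable {P : Type*} {Λ : Type*}

/-- `b` covers `a` with respect to the relation `le`. -/
def CovRel (le : P → P → Prop) (a b : P) : Prop :=
  le a b ∧ a ≠ b ∧ ∀ c, le a c → le c b → c = a ∨ c = b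

/-- `c` is a maximal (i.e. saturated) chain of the interval `[x, y]`: a sequence of covers
starting at `x` and ending at `y`. -/
def IsMaxChainIn (le : P → P → Prop) (x y : P) (c : List P) : Prop :=
  c.Chain' (CovRel le) ∧ c.head? = some x ∧ c.getLast? = some y

/-- The label sequence of a chain `c` under the edge labeling `lab`. -/
def labelSeq (lab : P → P → Λ) (c : List P) : List Λ :=
  (c.zip c.tail).map fun p => lab p.1 p.2

/-- `lab` is an EL-labeling with respect to the order `le` on `P` and the (strict) order
`lt` on the label poset `Λ`: every closed interval has exactly one maximal chain with
strictly increasing label sequence, and this chain is lexicographically strictly smaller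
than every other maximal chain of the interval. -/
def IsELLabeling (le : P → P → Prop) (lt : Λ → Λ → Prop) (lab : P → P → Λ) : Prop :=
  ∀ x y : P, le x y →
    ∃ c : List P, IsMaxChainIn le x y c ∧ (labelSeq lab c).Chain' lt ∧
      ∀ c' : List P, IsMaxChainIn le x y c' → c' ≠ c →
        ¬ (labelSeq lab c').Chain' lt ∧ List.Lex lt (labelSeq lab c) (labelSeq lab c')

/-- EL-shellability: existence of an EL-labeling into some strictly ordered label type. -/
def IsELShellable (le : P → P → Prop) : Prop :=
  ∃ (Λ' : Type) (lt : Λ' → Λ' → Prop), IsStrictOrder Λ' lt ∧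
    ∃ lab : P → P → Λ', IsELLabeling le lt lab

end ELShellability

/-- The set of `m`-divisible noncrossing partitions `NC^{(m)}` (as `(m+1)`-tuples). -/
def NCmSet (d n m : ℕ) (γ : GLn n) : Set (Fin (m + 1) → GLn n) :=
  {w | (List.ofFn w).prod = γ ∧ (∑ i, ellT d n (w i)) = ellT d n γ}

/-- The order on `m`-divisible noncrossing partitions:
`(u₀; u₁, …, u_m) ≤ (v₀; v₁, …, v_m)` iff `v_i ≤_T u_i` for all `1 ≤ i ≤ m`. -/
def NCmLe (d n : ℕ) {m : ℕ} (u v : Fin (m + 1) → GLn n) : Prop :=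
  ∀ i : Fin (m + 1), i ≠ 0 → absLe d n (v i) (u i)

section Shifts

variable {G : Type*} [Monoid G]

/-- The left-shift of a word at (1-based) position `i`:
`(t₁, …, t_{i−2}, t_i, t_i t_{i−1} t_i, t_{i+1}, …, t_k)`. -/
def leftShiftAt (l : List G) (i : ℕ) : List G :=
  l.take (i - 2) ++ [l.getD (i - 1) 1, l.getD (i - 1) 1 * l.getD (i - 2) 1 * l.getD (i - 1) 1]
    ++ l.drop i

/-- The right-shift of a word at (1-based) position `i`:
`(t₁, …, t_{i−1}, t_i t_{i+1} t_i, t_i, t_{i+2}, …, t_k)`. -/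
def rightShiftAt (l : List G) (i : ℕ) : List G :=
  l.take (i - 1) ++ [l.getD (i - 1) 1 * l.getD i 1 * l.getD (i - 1) 1, l.getD (i - 1) 1]
    ++ l.drop (i + 1)

/-- One left-shift step between words. -/
def LeftShiftStep (l l' : List G) : Prop :=
  ∃ i, 2 ≤ i ∧ i ≤ l.length ∧ l' = leftShiftAt l i

/-- The word `l` has a descent at (1-based) position `p` with respect to the strict
relation `lt`, i.e. `t_p ≻ t_{p+1}`. -/
def HasDescentAt (lt : G → G → Prop) (l : List G) (p : ℕ) : Prop :=
  lt (l.getD p 1) (l.getD (p - 1) 1)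

end Shifts

/-- A `γ`-compatible reflection ordering (Definition 4.2 of the paper): for all
non-commuting reflections `t₁, t₂ ≤_T γ` and every rank-2 element `x ≤_T γ` above both,
there is exactly one ordered pair `(a, b)` of reflections below `x` with `ab = x` and
`a ≺ b`. -/
def IsCompatibleOrdering (d n : ℕ) (γ : GLn n) (lt : GLn n → GLn n → Prop) : Prop :=
  ∀ t1 t2 : GLn n, IsGddRefl d n t1 → IsGddRefl d n t2 →
    absLe d n t1 γ → absLe d n t2 γ → t1 * t2 ≠ t2 * t1 →
    ∀ x : GLn n, ellT d n x = 2 → absLe d n x γ → absLe d n t1 x → absLe d n t2 x →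
      ∃! p : GLn n × GLn n, IsGddRefl d n p.1 ∧ IsGddRefl d n p.2 ∧
        absLe d n p.1 x ∧ absLe d n p.2 x ∧ p.1 * p.2 = x ∧ lt p.1 p.2
section AuxStatement8

open Finset in
private lemma isGdd_mul' {d n : ℕ} {a b : GLn n} (ha : IsGdd d n a) (hb : IsGdd d n b) :
    IsGdd d n (a * b) := by
  obtain ⟨σ, z, hz, hzp, hE⟩ := ha
  obtain ⟨τ, y, hy, hyp, hF⟩ := hb
  refine ⟨τ.trans σ, fun l => z (τ l) * y l, fun l => by rw [mul_pow, hz, hy, one_mul],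
    ?_, fun k l => ?_⟩
  · rw [Finset.prod_mul_distrib, Equiv.prod_comp τ z, hzp, hyp, one_mul]
  · have : ((a * b : GLn n) : Matrix (Fin n) (Fin n) ℂ) k l
        = ∑ m, (a : Matrix (Fin n) (Fin n) ℂ) k m * (b : Matrix (Fin n) (Fin n) ℂ) m l := by
      rw [Units.val_mul, Matrix.mul_apply]
    rw [this]
    simp only [hE, hF]
    rw [Finset.sum_eq_single (τ l)]
    · simp [Equiv.trans_apply, ite_mul]
      split_ifs <;> simp_all
    · intro m _ hm; simp [hm]
    · intro h; exact absurd (Finset.mem_univ _) h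

private lemma isGdd_inv' {d n : ℕ} (hd : d ≠ 0) {a : GLn n} (ha : IsGdd d n a) :
    IsGdd d n a⁻¹ := by
  obtain ⟨σ, z, hz, hzp, hE⟩ := ha
  have hz0 : ∀ j, z j ≠ 0 := by
    intro j hj
    have := hz j
    rw [hj, zero_pow hd] at this
    exact one_ne_zero this.symm
  set M : Matrix (Fin n) (Fin n) ℂ :=
    Matrix.of (fun k l => if k = σ.symm l then (z (σ.symm l))⁻¹ else 0) with hM
  have hmul : (a : Matrix (Fin n) (Fin n) ℂ) * M = 1 := by
    ext k l
    rw [Matrix.mul_apply]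
    simp only [hM, Matrix.of_apply, hE]
    rw [Finset.sum_eq_single (σ.symm l)]
    · by_cases hkl : k = l
      · subst hkl
        simp [Equiv.apply_symm_apply, Matrix.one_apply, mul_inv_cancel₀ (hz0 _)]
      · have : k ≠ σ (σ.symm l) := by rw [Equiv.apply_symm_apply]; exact hkl
        simp [this, Matrix.one_apply, hkl]
    · intro m _ hm; simp [if_neg hm]
    · intro h; exact absurd (Finset.mem_univ _) h
  have hinv : ((a⁻¹ : GLn n) : Matrix (Fin n) (Fin n) ℂ) = M :=
    Units.inv_eq_of_mul_eq_one_right hmul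
  refine ⟨σ.symm, fun l => (z (σ.symm l))⁻¹, fun l => by rw [inv_pow, hz, inv_one], ?_,
    fun k l => by rw [hinv]; rfl⟩
  · have h : ∏ l, (z (σ.symm l))⁻¹ = 1 := by
      rw [Finset.prod_inv_distrib, Equiv.prod_comp σ.symm z, hzp, inv_one]
    simpa using h

private lemma mem_fixSpace' {n : ℕ} {w : GLn n} {x : Fin n → ℂ} :
    x ∈ fixSpace w ↔ (w : Matrix (Fin n) (Fin n) ℂ).mulVec x = x := by
  simp [fixSpace, LinearMap.mem_ker, LinearMap.sub_apply, sub_eq_zero]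

/-- The linear equivalence of `ℂⁿ` given by an invertible matrix. -/
private noncomputable def unitEquiv {n : ℕ} (b : GLn n) : (Fin n → ℂ) ≃ₗ[ℂ] (Fin n → ℂ) :=
  LinearEquiv.ofLinear (b : Matrix (Fin n) (Fin n) ℂ).mulVecLin
    ((b⁻¹ : GLn n) : Matrix (Fin n) (Fin n) ℂ).mulVecLin
    (by rw [← Matrix.mulVecLin_mul, ← Units.val_mul, mul_inv_cancel, Units.val_one,
      Matrix.mulVecLin_one])
    (by rw [← Matrix.mulVecLin_mul, ← Units.val_mul, inv_mul_cancel, Units.val_one,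
      Matrix.mulVecLin_one])

private lemma fixSpace_conj {n : ℕ} (a b : GLn n) :
    fixSpace (b⁻¹ * a * b) = (fixSpace a).comap ((unitEquiv b : (Fin n → ℂ) ≃ₗ[ℂ] (Fin n → ℂ))
      : (Fin n → ℂ) →ₗ[ℂ] (Fin n → ℂ)) := by
  ext x
  rw [Submodule.mem_comap]
  have hco : ((unitEquiv b : (Fin n → ℂ) ≃ₗ[ℂ] (Fin n → ℂ)) : (Fin n → ℂ) →ₗ[ℂ] (Fin n → ℂ)) x
      = (b : Matrix (Fin n) (Fin n) ℂ).mulVec x := rfl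
  rw [mem_fixSpace', mem_fixSpace', hco]
  have hval : ((b⁻¹ * a * b : GLn n) : Matrix (Fin n) (Fin n) ℂ)
      = ((b⁻¹ : GLn n) : Matrix (Fin n) (Fin n) ℂ) * (a : Matrix (Fin n) (Fin n) ℂ)
        * (b : Matrix (Fin n) (Fin n) ℂ) := by
    rw [Units.val_mul, Units.val_mul]
  have hbb : (b : Matrix (Fin n) (Fin n) ℂ) * ((b⁻¹ : GLn n) : Matrix (Fin n) (Fin n) ℂ) = 1 := by
    rw [← Units.val_mul, mul_inv_cancel, Units.val_one]
  have hbb' : ((b⁻¹ : GLn n) : Matrix (Fin n) (Fin n) ℂ) * (b : Matrix (Fin n) (Fin n) ℂ) = 1 := by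
    rw [← Units.val_mul, inv_mul_cancel, Units.val_one]
  constructor
  · intro h
    have h2 := congrArg (fun v => (b : Matrix (Fin n) (Fin n) ℂ).mulVec v) h
    simp only [hval, Matrix.mulVec_mulVec] at h2 ⊢
    rw [show (b : Matrix (Fin n) (Fin n) ℂ) * (((b⁻¹ : GLn n) : Matrix (Fin n) (Fin n) ℂ)
        * (a : Matrix (Fin n) (Fin n) ℂ) * (b : Matrix (Fin n) (Fin n) ℂ))
        = (a : Matrix (Fin n) (Fin n) ℂ) * (b : Matrix (Fin n) (Fin n) ℂ) from by
      rw [← mul_assoc, ← mul_assoc, hbb, one_mul]] at h2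
    exact h2
  · intro h
    have h2 := congrArg (fun v => ((b⁻¹ : GLn n) : Matrix (Fin n) (Fin n) ℂ).mulVec v) h
    simp only [Matrix.mulVec_mulVec] at h2
    rw [hbb', Matrix.one_mulVec] at h2
    rw [hval, mul_assoc]
    exact h2

private lemma finrank_fixSpace_conj {n : ℕ} (a b : GLn n) :
    Module.finrank ℂ (fixSpace (b⁻¹ * a * b)) = Module.finrank ℂ (fixSpace a) := by
  rw [fixSpace_conj, Submodule.comap_equiv_eq_map_symm]
  exact LinearEquiv.finrank_map_eq _ _

private lemma isGddRefl_conj {d n : ℕ} (hd : d ≠ 0) {a b : GLn n}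
    (ha : IsGddRefl d n a) (hb : IsGdd d n b) : IsGddRefl d n (b⁻¹ * a * b) := by
  obtain ⟨haG, haF, haR⟩ := ha
  refine ⟨isGdd_mul' (isGdd_mul' (isGdd_inv' hd hb) haG) hb, ?_, ?_⟩
  · obtain ⟨m, hm, hpow⟩ := isOfFinOrder_iff_pow_eq_one.mp haF
    refine isOfFinOrder_iff_pow_eq_one.mpr ⟨m, hm, ?_⟩
    have hcp : ∀ k : ℕ, (b⁻¹ * a * b) ^ k = b⁻¹ * a ^ k * b := by
      intro k
      induction k with
      | zero => simp
      | succ j ih => rw [pow_succ, pow_succ, ih]; group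
    rw [hcp, hpow, mul_one, inv_mul_cancel]
  · rw [finrank_fixSpace_conj]; exact haR

private lemma isGddRefl_inv {d n : ℕ} (hd : d ≠ 0) {a : GLn n}
    (ha : IsGddRefl d n a) : IsGddRefl d n a⁻¹ := by
  obtain ⟨haG, haF, haR⟩ := ha
  refine ⟨isGdd_inv' hd haG, haF.inv, ?_⟩
  have : fixSpace (a⁻¹ : GLn n) = fixSpace a := by
    ext x
    rw [mem_fixSpace', mem_fixSpace']
    constructor
    · intro h
      have h2 := congrArg (fun v => (a : Matrix (Fin n) (Fin n) ℂ).mulVec v) h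
      simp only [Matrix.mulVec_mulVec, ← Units.val_mul, mul_inv_cancel, Units.val_one,
        Matrix.one_mulVec] at h2
      exact h2.symm
    · intro h
      have h2 := congrArg (fun v => ((a⁻¹ : GLn n) : Matrix (Fin n) (Fin n) ℂ).mulVec v) h
      simp only [Matrix.mulVec_mulVec, ← Units.val_mul, inv_mul_cancel, Units.val_one,
        Matrix.one_mulVec] at h2
      exact h2.symm
  rw [this]; exact haR

private lemma eq_one_of_fixSpace_top {n : ℕ} {a : GLn n} (h : fixSpace a = ⊤) : a = 1 := by
  have hmv : ∀ x : Fin n → ℂ, (a : Matrix (Fin n) (Fin n) ℂ).mulVec x = x := by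
    intro x
    have hx : x ∈ fixSpace a := h ▸ Submodule.mem_top
    exact mem_fixSpace'.mp hx
  have hmat : (a : Matrix (Fin n) (Fin n) ℂ) = 1 := by
    ext k l
    have h1 := congrFun (hmv (Pi.single l 1)) k
    rw [Matrix.mulVec_single_one] at h1
    simp only [Matrix.col_apply] at h1
    rw [h1]
    simp [Matrix.one_apply, Pi.single_apply, eq_comm]
  exact Units.ext hmat

private lemma isGddRefl_sq {d n : ℕ} {a : GLn n} (ha : IsGddRefl d n a)
    (hne : a * a ≠ 1) : IsGddRefl d n (a * a) := by
  obtain ⟨haG, haF, haR⟩ := ha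
  refine ⟨isGdd_mul' haG haG, by simpa [sq] using haF.pow (n := 2), ?_⟩
  have hle : fixSpace a ≤ fixSpace (a * a) := by
    intro x hx
    rw [mem_fixSpace'] at hx ⊢
    rw [Units.val_mul, ← Matrix.mulVec_mulVec, hx, hx]
  have h1 : n - 1 ≤ Module.finrank ℂ (fixSpace (a * a)) := by
    rw [← haR]; exact Submodule.finrank_mono hle
  have h2 : Module.finrank ℂ (fixSpace (a * a)) < n := by
    have hne' : fixSpace (a * a) ≠ ⊤ := fun htop => hne (eq_one_of_fixSpace_top htop)
    have := Submodule.finrank_lt (K := ℂ) (V := Fin n → ℂ) hne'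
    rwa [Module.finrank_fin_fun] at this
  omega

private lemma ellT_le_length {d n : ℕ} {x : GLn n} {l : List (GLn n)}
    (hl : ∀ t ∈ l, IsGddRefl d n t) (hp : l.prod = x) : ellT d n x ≤ l.length :=
  Nat.sInf_le ⟨l, rfl, hl, hp⟩

private lemma exists_min_word {d n : ℕ} {x : GLn n}
    (h : ∃ l : List (GLn n), (∀ t ∈ l, IsGddRefl d n t) ∧ l.prod = x) :
    ∃ l : List (GLn n), l.length = ellT d n x ∧ (∀ t ∈ l, IsGddRefl d n t) ∧ l.prod = x := by
  obtain ⟨l, hl, hp⟩ := h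
  have hne : {k | ∃ l : List (GLn n), l.length = k ∧ (∀ t ∈ l, IsGddRefl d n t) ∧
      l.prod = x}.Nonempty := ⟨l.length, l, rfl, hl, hp⟩
  exact Nat.sInf_mem hne

private lemma ellT_mul_le {d n : ℕ} {u v x : GLn n} (hx : x = u * v)
    (hu : ∃ l : List (GLn n), (∀ t ∈ l, IsGddRefl d n t) ∧ l.prod = u)
    (hv : ∃ l : List (GLn n), (∀ t ∈ l, IsGddRefl d n t) ∧ l.prod = v) :
    ellT d n x ≤ ellT d n u + ellT d n v := by
  obtain ⟨lu, hlu, hlur, hlup⟩ := exists_min_word hu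
  obtain ⟨lv, hlv, hlvr, hlvp⟩ := exists_min_word hv
  have : ellT d n x ≤ (lu ++ lv).length :=
    ellT_le_length (fun t ht => by
      rcases List.mem_append.mp ht with h | h
      exacts [hlur t h, hlvr t h])
      (by rw [List.prod_append, hlup, hlvp, hx])
  rwa [List.length_append, hlu, hlv] at this

private lemma prod_conj_list {G : Type*} [Group G] (g : G) :
    ∀ l : List G, (l.map fun s => g⁻¹ * s * g).prod = g⁻¹ * l.prod * g
  | [] => by simp
  | x :: xs => by
      simp only [List.map_cons, List.prod_cons, prod_conj_list g xs]
      group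

private lemma hasWord_inv {d n : ℕ} (hd : d ≠ 0) {x : GLn n}
    (h : ∃ l : List (GLn n), (∀ t ∈ l, IsGddRefl d n t) ∧ l.prod = x) :
    ∃ l : List (GLn n), (∀ t ∈ l, IsGddRefl d n t) ∧ l.prod = x⁻¹ := by
  obtain ⟨l, hl, hp⟩ := h
  refine ⟨(l.map fun s => s⁻¹).reverse, fun t ht => ?_, ?_⟩
  · rw [List.mem_reverse, List.mem_map] at ht
    obtain ⟨s, hs, rfl⟩ := ht
    exact isGddRefl_inv hd (hl s hs)
  · rw [← List.prod_inv_reverse, hp]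

/-- Every letter of a reduced `T`-word for `w ≤_T γ` lies below `γ`. -/
private lemma letter_absLe {d n : ℕ} (hd : d ≠ 0) {γ w : GLn n} (hw : absLe d n w γ)
    (hlw : 1 ≤ ellT d n w) {c : List (GLn n)} (hc : IsReducedTWord d n w c)
    {t : GLn n} (ht : t ∈ c) : absLe d n t γ := by
  obtain ⟨hcr, hcp, hcl⟩ := hc
  obtain ⟨l1, l2, rfl⟩ := List.append_of_mem ht
  have htr : IsGddRefl d n t := hcr t ht
  have hl1 : ∀ s ∈ l1, IsGddRefl d n s := fun s hs => hcr s (by simp [hs])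
  have hl2 : ∀ s ∈ l2, IsGddRefl d n s := fun s hs => hcr s (by simp [hs])
  set L : List (GLn n) := (l1.map fun s => t⁻¹ * s * t) ++ l2 with hL
  have hLr : ∀ s ∈ L, IsGddRefl d n s := by
    intro s hs
    rcases List.mem_append.mp hs with h | h
    · rw [List.mem_map] at h
      obtain ⟨u, hu, rfl⟩ := h
      exact isGddRefl_conj hd (hl1 u hu) htr.1
    · exact hl2 s h
  have hLp : L.prod = t⁻¹ * w := by
    rw [hL, List.prod_append, prod_conj_list]
    rw [← hcp, List.prod_append, List.prod_cons]
    group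
  have hLlen : L.length + 1 = ellT d n w := by
    rw [hL, ← hcl]
    simp only [List.length_append, List.length_map, List.length_cons]
    omega
  have htw_le : ellT d n (t⁻¹ * w) ≤ L.length := ellT_le_length hLr hLp
  have ht_le : ellT d n t ≤ 1 := by
    have h := ellT_le_length (d := d) (n := n) (x := t) (l := [t])
      (by simpa using htr) (by simp)
    simpa using h
  have hw_le : ellT d n w ≤ ellT d n t + ellT d n (t⁻¹ * w) :=
    ellT_mul_le (by group) ⟨[t], by simpa using htr, by simp⟩ ⟨L, hLr, hLp⟩
  -- γ has a word
  have hγpos : 0 < ellT d n γ := by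
    rw [hw]; omega
  have hγword : ∃ l : List (GLn n), (∀ s ∈ l, IsGddRefl d n s) ∧ l.prod = γ := by
    by_contra hnone
    have hempty : {k | ∃ l : List (GLn n), l.length = k ∧ (∀ s ∈ l, IsGddRefl d n s) ∧
        l.prod = γ} = ∅ := by
      ext k
      simp only [Set.mem_setOf_eq, Set.mem_empty_iff_false, iff_false]
      rintro ⟨l, -, hlr, hlp⟩
      exact hnone ⟨l, hlr, hlp⟩
    have : ellT d n γ = 0 := by
      show sInf _ = 0
      rw [hempty]
      exact Nat.sInf_empty
    omega
  have hwinv : ∃ l : List (GLn n), (∀ s ∈ l, IsGddRefl d n s) ∧ l.prod = w⁻¹ :=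
    hasWord_inv hd ⟨l1 ++ t :: l2, hcr, hcp⟩
  have hwγword : ∃ l : List (GLn n), (∀ s ∈ l, IsGddRefl d n s) ∧ l.prod = w⁻¹ * γ := by
    obtain ⟨la, har, hap⟩ := hwinv
    obtain ⟨lb, hbr, hbp⟩ := hγword
    exact ⟨la ++ lb, fun s hs => by
      rcases List.mem_append.mp hs with h | h
      exacts [har s h, hbr s h], by rw [List.prod_append, hap, hbp]⟩
  have h1 : ellT d n (t⁻¹ * γ) ≤ ellT d n (t⁻¹ * w) + ellT d n (w⁻¹ * γ) :=
    ellT_mul_le (by group) ⟨L, hLr, hLp⟩ hwγword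
  have htγword : ∃ l : List (GLn n), (∀ s ∈ l, IsGddRefl d n s) ∧ l.prod = t⁻¹ * γ := by
    obtain ⟨la, har, hap⟩ : ∃ l : List (GLn n), (∀ s ∈ l, IsGddRefl d n s) ∧
        l.prod = t⁻¹ * w := ⟨L, hLr, hLp⟩
    obtain ⟨lb, hbr, hbp⟩ := hwγword
    exact ⟨la ++ lb, fun s hs => by
      rcases List.mem_append.mp hs with h | h
      exacts [har s h, hbr s h], by rw [List.prod_append, hap, hbp]; group⟩
  have h2 : ellT d n γ ≤ ellT d n t + ellT d n (t⁻¹ * γ) :=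
    ellT_mul_le (by group) ⟨[t], by simpa using htr, by simp⟩ htγword
  show ellT d n γ = ellT d n t + ellT d n (t⁻¹ * γ)
  rw [hw] at *
  omega

private lemma lex_head_of_prefix {α : Type*} {lt : α → α → Prop} :
    ∀ (pre : List α) {a b : α} {s1 s2 : List α}, (∀ x ∈ pre, ¬ lt x x) →
      List.Lex lt (pre ++ a :: s1) (pre ++ b :: s2) → lt a b ∨ a = b
  | [], a, b, s1, s2, _, h => by
      cases h with
      | rel h => exact Or.inl h
      | cons h => exact Or.inr rfl
  | x :: pre, a, b, s1, s2, hx, h => by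
      cases h with
      | rel h => exact absurd h (hx x List.mem_cons_self)
      | cons h => exact lex_head_of_prefix pre (fun y hy => hx y (List.mem_cons_of_mem x hy)) h

private lemma not_chain'_decomp {α : Type*} {R : α → α → Prop} :
    ∀ {l : List α}, ¬ l.Chain' R → ∃ l1 a b l2, l = l1 ++ a :: b :: l2 ∧ ¬ R a b := by
  intro l
  induction l with
  | nil => intro h; exact absurd List.isChain_nil h
  | cons x t ih =>
    intro h
    match t, ih with
    | [], _ => exact absurd (List.isChain_singleton x) h
    | y :: t2, ih =>
      simp only [List.Chain', List.isChain_cons_cons] at h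
      by_cases hxy : R x y
      · have hnt : ¬ (y :: t2).Chain' R := fun hc => h ⟨hxy, hc⟩
        obtain ⟨l1, a, b, l2, heq, hR⟩ := ih hnt
        exact ⟨x :: l1, a, b, l2, by rw [List.cons_append, ← heq], hR⟩
      · exact ⟨[], x, y, t2, rfl, hxy⟩

end AuxStatement8


/-- For any total order `≺'` on `T_γ` and any `w ≤_T γ` with
`ℓ_T(w) ≥ 1`, the lexicographically smallest reduced `T`-word for `w` is strictly
increasing with respect to `≺'`. -/
theorem lex_smallest_reduced_word_is_rising
    (d n : ℕ) (hd : 3 ≤ d) (hn : 2 ≤ n)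
    (γ : GLn n) (hγ : (γ : Matrix (Fin n) (Fin n) ℂ) = gammaMat d n)
    (lt : GLn n → GLn n → Prop)
    (hirr : ∀ t ∈ TgammaSet d n γ, ¬ lt t t)
    (htrans : ∀ a ∈ TgammaSet d n γ, ∀ b ∈ TgammaSet d n γ, ∀ c ∈ TgammaSet d n γ,
      lt a b → lt b c → lt a c)
    (htot : ∀ a ∈ TgammaSet d n γ, ∀ b ∈ TgammaSet d n γ, a ≠ b → lt a b ∨ lt b a)
    (w : GLn n) (hw : absLe d n w γ) (hlw : 1 ≤ ellT d n w)
    (c : List (GLn n)) (hc : IsReducedTWord d n w c)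
    (hmin : ∀ c' : List (GLn n), IsReducedTWord d n w c' → c' = c ∨ List.Lex lt c c') :
    c.Chain' lt := by
  have hd0 : d ≠ 0 := by omega
  by_contra hch
  obtain ⟨l1, a, b, l2, hdec, hnR⟩ := not_chain'_decomp hch
  have hmem : ∀ x ∈ c, x ∈ TgammaSet d n γ := fun x hx =>
    ⟨hc.1 x hx, letter_absLe hd0 hw hlw hc hx⟩
  have ha_mem : a ∈ c := by rw [hdec]; simp
  have hb_mem : b ∈ c := by rw [hdec]; simp
  have haR : IsGddRefl d n a := hc.1 a ha_mem
  have hbR : IsGddRefl d n b := hc.1 b hb_mem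
  have hclen : c.length = ellT d n w := hc.2.2
  have hcp : c.prod = w := hc.2.1
  have hlen : c.length = l1.length + 2 + l2.length := by
    rw [hdec]; simp; omega
  by_cases hab : a = b
  · subst hab
    by_cases hsq : a * a = 1
    · -- delete the two letters: shorter word
      have hple : ellT d n w ≤ (l1 ++ l2).length := by
        refine ellT_le_length (fun s hs => ?_) ?_
        · rcases List.mem_append.mp hs with h | h
          · exact hc.1 s (by rw [hdec]; simp [h])
          · exact hc.1 s (by rw [hdec]; simp [h])
        · rw [← hcp, hdec, List.prod_append, List.prod_append, List.prod_cons, List.prod_cons,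
            show a * (a * l2.prod) = l2.prod from by rw [← mul_assoc, hsq, one_mul]]
      rw [List.length_append] at hple
      omega
    · -- replace the two letters by their product: shorter word
      have haaR : IsGddRefl d n (a * a) := isGddRefl_sq haR hsq
      have hple : ellT d n w ≤ (l1 ++ (a * a) :: l2).length := by
        refine ellT_le_length (fun s hs => ?_) ?_
        · rcases List.mem_append.mp hs with h | h
          · exact hc.1 s (by rw [hdec]; simp [h])
          · rcases List.mem_cons.mp h with rfl | h
            · exact haaR
            · exact hc.1 s (by rw [hdec]; simp [h])
        · rw [← hcp, hdec, List.prod_append, List.prod_append, List.prod_cons, List.prod_cons,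
            List.prod_cons, mul_assoc]
      rw [List.length_append, List.length_cons] at hple
      omega
  · -- swap: c'' = l1 ++ b :: (b⁻¹ * a * b) :: l2
    set t' : GLn n := b⁻¹ * a * b with ht'
    have ht'R : IsGddRefl d n t' := isGddRefl_conj hd0 haR hbR.1
    have hred : IsReducedTWord d n w (l1 ++ b :: t' :: l2) := by
      refine ⟨fun s hs => ?_, ?_, ?_⟩
      · rcases List.mem_append.mp hs with h | h
        · exact hc.1 s (by rw [hdec]; simp [h])
        · rcases List.mem_cons.mp h with rfl | h
          · exact hbR
          · rcases List.mem_cons.mp h with rfl | h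
            · exact ht'R
            · exact hc.1 s (by rw [hdec]; simp [h])
      · rw [List.prod_append, List.prod_cons, List.prod_cons, ← hcp, hdec,
          List.prod_append, List.prod_cons, List.prod_cons, ht']
        group
      · rw [← hclen, hdec]
        simp
    rcases hmin _ hred with heq | hlex
    · -- equality forces b = a
      have hthis := congrArg (fun l => List.drop l1.length l) heq
      simp only [List.drop_left, hdec] at hthis
      have hba : b = a := by injection hthis
      exact hab hba.symm
    · -- lex gives lt a b, contradiction
      rw [hdec] at hlex
      have hirr1 : ∀ x ∈ l1, ¬ lt x x := fun x hx =>
        hirr x (hmem x (by rw [hdec]; simp [hx]))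
      rcases lex_head_of_prefix l1 hirr1 hlex with h | h
      · exact hnR h
      · exact hab h
end

section
/- Let d ≥ 3 and n ≥ 2 be integers. Then γ has order d(n−1) in G(d,d,n), and there exists a vector v ∈ ℂ^n with γv = e^{2πi/(d(n−1))}·v such that v does not lie in the fixed space of any reflection of G(d,d,n); that is, γ is a regular element for the primitive d(n−1)-th root of unity e^{2πi/(d(n−1))}, where d(n−1) is the largest degree of G(d,d,n), and hence γ is a Coxeter element of G(d,d,n). -/
open Matrix Complex

section AuxLemmas

lemma zetaC_ne_zero (d : ℕ) : zetaC d ≠ 0 := Complex.exp_ne_zero _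

lemma zetaC_pow_self (d : ℕ) (hd : d ≠ 0) : zetaC d ^ d = 1 := by
  rw [zetaC, ← Complex.exp_nat_mul]
  rw [mul_div_cancel₀]
  · exact Complex.exp_two_pi_mul_I
  · exact_mod_cast hd

lemma zetaC_pow_eq_one_iff (N : ℕ) (hN : N ≠ 0) (m : ℕ) : zetaC N ^ m = 1 ↔ N ∣ m := by
  constructor
  · intro h
    rw [zetaC, ← Complex.exp_nat_mul, Complex.exp_eq_one_iff] at h
    obtain ⟨k, hk⟩ := h
    have hNC : (N : ℂ) ≠ 0 := by exact_mod_cast hN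
    have h2 : (2 * (Real.pi:ℂ) * Complex.I) ≠ 0 := Complex.two_pi_I_ne_zero
    have hk' : (m:ℂ) * (2 * (Real.pi:ℂ) * Complex.I) = ((k:ℂ) * N) * (2 * (Real.pi:ℂ) * Complex.I) := by
      field_simp at hk
      linear_combination (2 * (Real.pi:ℂ) * Complex.I) * hk
    have hmc : (m : ℂ) = (k : ℂ) * N := mul_right_cancel₀ h2 hk'
    have hmz : (m : ℤ) = k * N := by exact_mod_cast hmc
    exact Int.ofNat_dvd.mp ⟨k, by rw [hmz]; ring⟩
  · rintro ⟨c, rfl⟩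
    rw [pow_mul, zetaC_pow_self N hN, one_pow]

lemma zetaC_pow_sub (N : ℕ) (hd : 2 ≤ N) (n : ℕ) (hn : 2 ≤ n) :
    zetaC (N * (n-1)) ^ (n - 1) = zetaC N := by
  have hn1 : ((n:ℂ) - 1) ≠ 0 := by
    have : (n:ℂ) ≠ 1 := by exact_mod_cast (by omega : n ≠ 1)
    exact sub_ne_zero.mpr this
  have h3 : (N:ℂ) ≠ 0 := by exact_mod_cast (by omega : N ≠ 0)
  rw [zetaC, zetaC, ← Complex.exp_nat_mul]
  congr 1
  rw [show ((N*(n-1):ℕ):ℂ) = (N:ℂ)*((n:ℂ)-1) from by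
        push_cast [Nat.cast_sub (by omega : 1 ≤ n)]; ring,
      show ((n-1:ℕ):ℂ) = (n:ℂ)-1 from by
        push_cast [Nat.cast_sub (by omega : 1 ≤ n)]; ring]
  field_simp

noncomputable def Mpow (d n m : ℕ) : Matrix (Fin n) (Fin n) ℂ :=
  Matrix.of fun k l : Fin n =>
    if (l:ℕ)+1 = n then (if k = l then ((zetaC d)⁻¹) ^ m else 0)
    else if (k:ℕ) = ((l:ℕ)+m) % (n-1) then zetaC d ^ (((l:ℕ)+m) / (n-1)) else 0

lemma gammaMat_pow (d n : ℕ) (hn : 2 ≤ n) (m : ℕ) :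
    (gammaMat d n) ^ m = Mpow d n m := by
  induction m with
  | zero =>
    ext k l
    simp only [pow_zero, Mpow, Matrix.of_apply, Matrix.one_apply, pow_zero]
    by_cases hl : (l:ℕ)+1 = n
    · simp [hl]
    · have hlt : (l:ℕ) < n - 1 := by omega
      rw [if_neg hl, Nat.add_zero, Nat.mod_eq_of_lt hlt, Nat.div_eq_of_lt hlt, pow_zero]
      by_cases hkl : k = l
      · simp [hkl]
      · rw [if_neg hkl, if_neg (fun h => hkl (Fin.ext h))]
  | succ m ih =>
    rw [pow_succ', ih]
    ext k l
    rw [Matrix.mul_apply]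
    by_cases hl : (l:ℕ)+1 = n
    · have hstep : ∀ j : Fin n, gammaMat d n k j * Mpow d n m j l
          = if j = l then gammaMat d n k l * ((zetaC d)⁻¹)^m else 0 := by
        intro j
        simp only [Mpow, Matrix.of_apply, if_pos hl]
        by_cases h : j = l <;> simp [h]
      rw [Finset.sum_congr rfl fun j _ => hstep j, Finset.sum_ite_eq' Finset.univ l]
      simp only [Finset.mem_univ, if_pos]
      simp only [gammaMat, Mpow, Matrix.of_apply, if_pos hl]
      rw [if_neg (by omega : ¬((l:ℕ)+2 < n ∧ (k:ℕ) = (l:ℕ)+1)),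
          if_neg (by omega : ¬((l:ℕ)+2 = n ∧ (k:ℕ) = 0))]
      by_cases hkl : k = l
      · rw [if_pos ⟨hl, hkl⟩, if_pos hkl, pow_succ']
      · rw [if_neg (fun h => hkl h.2), if_neg hkl, zero_mul]
    · have hlt : (l:ℕ) < n - 1 := by omega
      set c := (l:ℕ) + m with hcdef
      have hr : c % (n-1) < n - 1 := Nat.mod_lt _ (by omega)
      set r := c % (n-1) with hrdef
      set q := c / (n-1) with hqdef
      have hc : (n-1) * q + r = c := Nat.div_add_mod c (n-1)
      set j0 : Fin n := ⟨r, by omega⟩ with hj0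
      have hj0v : (j0 : ℕ) = r := rfl
      have hstep : ∀ j : Fin n, gammaMat d n k j * Mpow d n m j l
          = if j = j0 then gammaMat d n k j0 * zetaC d ^ q else 0 := by
        intro j
        simp only [Mpow, Matrix.of_apply, if_neg hl, ← hcdef, ← hrdef, ← hqdef]
        by_cases h : j = j0
        · rw [if_pos h, if_pos (by rw [h]), h]
        · rw [if_neg h, if_neg (fun hv => h (Fin.ext hv)), mul_zero]
      rw [Finset.sum_congr rfl fun j _ => hstep j, Finset.sum_ite_eq' Finset.univ j0]
      simp only [Finset.mem_univ, if_pos]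
      have hlm1 : (l:ℕ) + (m+1) = c + 1 := by omega
      by_cases hr2 : r + 2 < n
      · have hsplit : c + 1 = (r+1) + (n-1) * q := by omega
        have e1 : (c+1) % (n-1) = r + 1 := by
          rw [hsplit, Nat.add_mul_mod_self_left, Nat.mod_eq_of_lt (by omega)]
        have e2 : (c+1) / (n-1) = q := by
          rw [hsplit, Nat.add_mul_div_left _ _ (by omega : 0 < n-1),
            Nat.div_eq_of_lt (by omega), zero_add]
        simp only [gammaMat, Mpow, Matrix.of_apply, if_neg hl, hlm1, e1, e2, hj0]
        rw [if_neg (by simp only [hj0v]; omega : ¬((j0:ℕ)+2 = n ∧ (k:ℕ) = 0)),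
            if_neg (fun h => by simp only [hj0v] at h; omega : ¬((j0:ℕ)+1 = n ∧ k = j0))]
        by_cases hk : (k:ℕ) = r + 1
        · rw [if_pos ⟨by simpa [hj0] using hr2, by simpa [hj0] using hk⟩, if_pos hk, one_mul]
        · rw [if_neg (fun h => hk (by simpa [hj0] using h.2)), if_neg hk, zero_mul]
      · have hr2' : r + 2 = n := by omega
        obtain ⟨P, hP⟩ : ∃ P, (n-1)*q = P := ⟨_, rfl⟩
        have hsplit : c + 1 = (n-1)*(q+1) := by rw [Nat.mul_succ, hP]; rw [hP] at hc; omega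
        have e1 : (c+1) % (n-1) = 0 := by rw [hsplit]; exact Nat.mul_mod_right _ _
        have e2 : (c+1) / (n-1) = q+1 := by
          rw [hsplit]; exact Nat.mul_div_cancel_left _ (by omega)
        simp only [gammaMat, Mpow, Matrix.of_apply, if_neg hl, hlm1, e1, e2, hj0]
        rw [if_neg (by simp only [hj0v]; omega : ¬((j0:ℕ)+2 < n ∧ (k:ℕ) = (j0:ℕ)+1)),
            if_neg (fun h => by simp only [hj0v] at h; omega : ¬((j0:ℕ)+1 = n ∧ k = j0))]
        by_cases hk : (k:ℕ) = 0
        · rw [if_pos ⟨by simpa [hj0] using hr2', hk⟩, if_pos hk, pow_succ']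
        · rw [if_neg (fun h => hk h.2), if_neg hk, zero_mul]

end AuxLemmas

/-- For `d ≥ 3` and `n ≥ 2`, the element `γ` has order `d(n−1)` and has
a regular eigenvector for the primitive `d(n−1)`-th root of unity `exp(2πi/(d(n−1)))`;
hence `γ` is a Coxeter element of `G(d,d,n)`. -/
theorem gamma_is_regular_of_order_dn_minus_one
    (d n : ℕ) (hd : 3 ≤ d) (hn : 2 ≤ n)
    (γ : GLn n) (hγ : (γ : Matrix (Fin n) (Fin n) ℂ) = gammaMat d n) :
    orderOf γ = d * (n - 1) ∧
    ∃ v : Fin n → ℂ,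
      (γ : Matrix (Fin n) (Fin n) ℂ).mulVec v =
        Complex.exp (2 * (Real.pi : ℂ) * Complex.I / ((d * (n - 1) : ℕ) : ℂ)) • v ∧
      ∀ t : GLn n, IsGddRefl d n t → v ∉ fixSpace t := by
  have hn1 : 1 ≤ n - 1 := by omega
  set N := d * (n - 1) with hNdef
  have hNn : n ≤ N := by
    calc n ≤ 3 * (n - 1) := by omega
    _ ≤ d * (n - 1) := Nat.mul_le_mul_right _ hd
  have hN0 : N ≠ 0 := by omega
  set θ := zetaC N with hθdef
  have hθ0 : θ ≠ 0 := zetaC_ne_zero N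
  have hθN : θ ^ N = 1 := zetaC_pow_self N hN0
  have hθiff : ∀ m, θ ^ m = 1 ↔ N ∣ m := zetaC_pow_eq_one_iff N hN0
  have hζ : θ ^ (n - 1) = zetaC d := zetaC_pow_sub d (by omega) n hn
  set v : Fin n → ℂ := fun k => if (k : ℕ) + 1 = n then 0 else θ ^ (N - (k : ℕ)) with hvdef
  have hvlast : ∀ k : Fin n, (k : ℕ) + 1 = n → v k = 0 := by
    intro k hk; simp only [hvdef]; rw [if_pos hk]
  have hvmid : ∀ k : Fin n, (k : ℕ) + 1 ≠ n → v k = θ ^ (N - (k : ℕ)) := by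
    intro k hk; simp only [hvdef]; rw [if_neg hk]
  have hvne : ∀ k : Fin n, (k : ℕ) + 1 ≠ n → v k ≠ 0 := by
    intro k hk; rw [hvmid k hk]; exact pow_ne_zero _ hθ0
  -- the eigenvector equation
  have heig : (gammaMat d n).mulVec v = θ • v := by
    funext k
    simp only [Matrix.mulVec, dotProduct, Pi.smul_apply, smul_eq_mul]
    by_cases hk : (k : ℕ) + 1 = n
    · rw [Finset.sum_eq_zero, hvlast k hk, mul_zero]
      intro l _
      by_cases hl : (l : ℕ) + 1 = n
      · rw [hvlast l hl, mul_zero]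
      · have : gammaMat d n k l = 0 := by
          simp only [gammaMat, Matrix.of_apply]
          rw [if_neg (by omega : ¬((l:ℕ)+2 < n ∧ (k:ℕ) = (l:ℕ)+1)),
            if_neg (by omega : ¬((l:ℕ)+2 = n ∧ (k:ℕ) = 0)),
            if_neg (fun h => hl h.1)]
        rw [this, zero_mul]
    · by_cases hk0 : (k : ℕ) = 0
      · have hl0 : n - 2 < n := by omega
        rw [Finset.sum_eq_single (⟨n-2, hl0⟩ : Fin n)]
        · have e1 : gammaMat d n k ⟨n-2, hl0⟩ = zetaC d := by
            simp only [gammaMat, Matrix.of_apply]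
            rw [if_neg (by simp only [Fin.val_mk, Fin.ext_iff] at *; omega :
                ¬(((⟨n-2, hl0⟩ : Fin n):ℕ)+2 < n ∧ (k:ℕ) = ((⟨n-2, hl0⟩ : Fin n):ℕ)+1)),
              if_pos ⟨by omega, hk0⟩]
          rw [e1, hvmid _ (by simp only [Fin.val_mk, Fin.ext_iff] at *; omega), hvmid k hk, ← hζ, ← pow_add]
          rw [show (n - 1) + (N - ((⟨n-2, hl0⟩ : Fin n) : ℕ)) = (N - (k:ℕ)) + 1 from by
            simp only [Fin.val_mk]; omega]
          rw [pow_succ, mul_comm]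
        · intro l _ hl
          have : gammaMat d n k l = 0 := by
            simp only [gammaMat, Matrix.of_apply]
            rw [if_neg (by omega : ¬((l:ℕ)+2 < n ∧ (k:ℕ) = (l:ℕ)+1)),
              if_neg (fun h => hl (Fin.ext (by simp only [Fin.val_mk, Fin.ext_iff] at *; omega))),
              if_neg (fun h => by rw [h.2] at hk0; omega)]
          rw [this, zero_mul]
        · intro h; exact absurd (Finset.mem_univ _) h
      · have hl0 : (k : ℕ) - 1 < n := by omega
        rw [Finset.sum_eq_single (⟨(k:ℕ)-1, hl0⟩ : Fin n)]
        · have e1 : gammaMat d n k ⟨(k:ℕ)-1, hl0⟩ = 1 := by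
            simp only [gammaMat, Matrix.of_apply]
            rw [if_pos ⟨by omega, by omega⟩]
          rw [e1, one_mul, hvmid _ (by simp only [Fin.val_mk, Fin.ext_iff] at *; omega), hvmid k hk]
          rw [show N - ((⟨(k:ℕ)-1, hl0⟩ : Fin n) : ℕ) = (N - (k:ℕ)) + 1 from by
            simp only [Fin.val_mk]; omega]
          rw [pow_succ, mul_comm]
        · intro l _ hl
          have : gammaMat d n k l = 0 := by
            simp only [gammaMat, Matrix.of_apply]
            rw [if_neg (fun h => hl (Fin.ext (by simp only [Fin.val_mk, Fin.ext_iff] at *; omega))),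
              if_neg (fun h => hk0 h.2),
              if_neg (fun h => by rw [h.2] at hk; omega)]
          rw [this, zero_mul]
        · intro h; exact absurd (Finset.mem_univ _) h
  have hvpow : ∀ m : ℕ, ((gammaMat d n) ^ m).mulVec v = θ ^ m • v := by
    intro m
    induction m with
    | zero => rw [pow_zero, pow_zero, one_smul, Matrix.one_mulVec]
    | succ m ih =>
      rw [pow_succ', ← Matrix.mulVec_mulVec, ih, Matrix.mulVec_smul, heig, smul_smul,
        ← pow_succ]
  have hγpow : ∀ m : ℕ, ((γ ^ m : GLn n) : Matrix (Fin n) (Fin n) ℂ) = (gammaMat d n) ^ m := by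
    intro m
    rw [Units.val_pow_eq_pow_val, hγ]
  have hγN : γ ^ N = 1 := by
    apply Units.ext
    rw [hγpow N, gammaMat_pow d n hn N, Units.val_one]
    ext k l
    simp only [Mpow, Matrix.of_apply, Matrix.one_apply]
    by_cases hl : (l : ℕ) + 1 = n
    · have : ((zetaC d)⁻¹) ^ N = 1 := by
        rw [inv_pow, inv_eq_one, hNdef, pow_mul, zetaC_pow_self d (by omega), one_pow]
      rw [if_pos hl, this]
    · have hlt : (l : ℕ) < n - 1 := by omega
      have e1 : ((l : ℕ) + N) % (n - 1) = (l : ℕ) := by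
        rw [hNdef, Nat.add_mul_mod_self_right, Nat.mod_eq_of_lt hlt]
      have e2 : ((l : ℕ) + N) / (n - 1) = d := by
        rw [hNdef, Nat.add_mul_div_right _ _ (by omega : 0 < n - 1),
          Nat.div_eq_of_lt hlt, zero_add]
      rw [if_neg hl, e1, e2, zetaC_pow_self d (by omega)]
      by_cases hkl : k = l
      · rw [if_pos (by rw [hkl]), if_pos hkl]
      · rw [if_neg (fun h => hkl (Fin.ext h)), if_neg hkl]
  have k0lt : 0 < n := by omega
  have hv0 : v ⟨0, k0lt⟩ = 1 := by
    rw [hvmid _ (by simp only [Fin.val_mk, Fin.ext_iff] at *; omega)]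
    simp only [Fin.val_mk, Nat.sub_zero]
    exact hθN
  have hNdvd : N ∣ orderOf γ := by
    have h1 : ((γ ^ orderOf γ : GLn n) : Matrix (Fin n) (Fin n) ℂ) = 1 := by
      rw [pow_orderOf_eq_one, Units.val_one]
    rw [hγpow] at h1
    have h2 := hvpow (orderOf γ)
    rw [h1, Matrix.one_mulVec] at h2
    have h3 := congrFun h2 ⟨0, k0lt⟩
    rw [Pi.smul_apply, hv0, smul_eq_mul, mul_one] at h3
    exact (hθiff _).mp h3.symm
  have hord : orderOf γ = N :=
    Nat.dvd_antisymm (orderOf_dvd_of_pow_eq_one hγN) hNdvd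
  refine ⟨hord, v, by rw [hγ]; exact heig, ?_⟩
  -- no reflection fixes v
  rintro t ⟨⟨σ, z, hzpow, hzprod, hentry⟩, -, hrank⟩ hvmem
  have hz0 : ∀ j, z j ≠ 0 := by
    intro j h
    have := hzpow j
    rw [h, zero_pow (by omega : d ≠ 0)] at this
    exact zero_ne_one this
  have htv : (t : Matrix (Fin n) (Fin n) ℂ).mulVec v = v := by
    have h1 : v ∈ LinearMap.ker
        ((t : Matrix (Fin n) (Fin n) ℂ).mulVecLin - LinearMap.id) := hvmem
    rw [LinearMap.mem_ker, LinearMap.sub_apply, Matrix.mulVecLin_apply, LinearMap.id_apply,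
      sub_eq_zero] at h1
    exact h1
  have hcoord : ∀ l, v (σ l) = z l * v l := by
    intro l
    have h1 : (t : Matrix (Fin n) (Fin n) ℂ).mulVec v (σ l) = z l * v l := by
      simp only [Matrix.mulVec, dotProduct]
      rw [Finset.sum_eq_single l]
      · rw [hentry, if_pos rfl]
      · intro j _ hj
        rw [hentry, if_neg (fun h => hj (σ.injective h).symm), zero_mul]
      · intro h; exact absurd (Finset.mem_univ _) h
    rw [← h1, htv]
  have hLlt : n - 1 < n := by omega
  set L : Fin n := ⟨n - 1, hLlt⟩ with hLdef
  have hLv : (L : ℕ) = n - 1 := rfl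
  have hvL : v L = 0 := hvlast L (by omega)
  have hnotL : ∀ k : Fin n, k ≠ L → (k : ℕ) < n - 1 := by
    intro k hk
    have : (k : ℕ) ≠ n - 1 := fun h => hk (Fin.ext (by rw [h, hLv]))
    omega
  have hvneL : ∀ k : Fin n, k ≠ L → v k ≠ 0 := by
    intro k hk
    exact hvne k (by have := hnotL k hk; omega)
  have hσL : σ L = L := by
    have h1 := hcoord (σ.symm L)
    rw [Equiv.apply_symm_apply, hvL] at h1
    have h2 : v (σ.symm L) = 0 := by
      rcases mul_eq_zero.mp h1.symm with h | h
      · exact absurd h (hz0 _)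
      · exact h
    have h3 : σ.symm L = L := by
      by_contra hne
      exact hvneL _ hne h2
    have h4 := congrArg σ h3
    rw [Equiv.apply_symm_apply] at h4
    exact h4.symm
  have hσfix : ∀ l, σ l = l := by
    intro l
    by_cases hlL : l = L
    · rw [hlL, hσL]
    · have hσlL : σ l ≠ L := by
        intro h
        rw [← hσL] at h
        exact hlL (σ.injective h)
      have hl1 : (l : ℕ) < n - 1 := hnotL l hlL
      have hsl1 : ((σ l : Fin n) : ℕ) < n - 1 := hnotL _ hσlL
      have h1 : θ ^ (N - ((σ l : Fin n) : ℕ)) = z l * θ ^ (N - (l : ℕ)) := by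
        rw [← hvmid _ (by omega), ← hvmid l (by omega)]
        exact hcoord l
      have h2 : θ ^ (d * (N - ((σ l : Fin n) : ℕ))) = θ ^ (d * (N - (l : ℕ))) := by
        rw [mul_comm d, mul_comm d, pow_mul, pow_mul, h1, mul_pow, hzpow l, one_mul]
      have hle1 : d * (N - (l : ℕ)) ≤ d * N := Nat.mul_le_mul_left _ (Nat.sub_le _ _)
      have hexp : d * (N - (l : ℕ)) + (d * N - d * (N - (l : ℕ))) = N * d := by
        zify [show (l : ℕ) ≤ N from by omega, hle1]
        ring
      have h3 : θ ^ (d * (N - ((σ l : Fin n) : ℕ)) + (d * N - d * (N - (l : ℕ)))) = 1 := by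
        rw [pow_add, h2, ← pow_add, hexp, pow_mul, hθN, one_pow]
      have h4 := (hθiff _).mp h3
      have h6 : d * N - d * (N - (l : ℕ)) = d * (l : ℕ) := by
        zify [show (l : ℕ) ≤ N from by omega, hle1]
        ring
      have h5 : d * (N - ((σ l : Fin n) : ℕ)) + (d * N - d * (N - (l : ℕ)))
          = d * ((N - ((σ l : Fin n) : ℕ)) + (l : ℕ)) := by
        rw [h6, Nat.mul_add]
      rw [h5, hNdef] at h4
      obtain ⟨c, hc⟩ := h4
      have h7 : (N - ((σ l : Fin n) : ℕ)) + (l : ℕ) = (n - 1) * c :=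
        Nat.eq_of_mul_eq_mul_left (by omega : 0 < d) (by rw [hc]; ring)
      have hNn1 : n - 1 ≤ N := by
        calc n - 1 ≤ 1 * (n - 1) := by omega
        _ ≤ d * (n - 1) := Nat.mul_le_mul_right _ (by omega)
      have h8 : ∃ c2, N - (n - 1) = (n - 1) * c2 := ⟨d - 1, by
        rw [hNdef]
        zify [show n - 1 ≤ d * (n - 1) from hNn1, show (1:ℕ) ≤ d from by omega,
          show (1:ℕ) ≤ n from by omega]
        ring⟩
      obtain ⟨c2, hc2⟩ := h8
      have h9 : (n - 1) ∣ ((N - ((σ l : Fin n) : ℕ)) + (l : ℕ) - (N - (n - 1))) :=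
        Nat.dvd_sub ⟨c, h7⟩ ⟨c2, hc2⟩
      have h10 : (N - ((σ l : Fin n) : ℕ)) + (l : ℕ) - (N - (n - 1))
          = (n - 1) - ((σ l : Fin n) : ℕ) + (l : ℕ) := by omega
      rw [h10] at h9
      obtain ⟨c3, hc3⟩ := h9
      have hcne : c3 ≠ 0 := by
        rintro rfl
        rw [Nat.mul_zero] at hc3
        omega
      have hclt : c3 < 2 := by
        by_contra hcge
        push_neg at hcge
        have : (n - 1) * 2 ≤ (n - 1) * c3 := Nat.mul_le_mul_left _ hcge
        omega
      have hc31 : c3 = 1 := by omega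
      rw [hc31, Nat.mul_one] at hc3
      exact Fin.ext (by omega)
  have hz1 : ∀ l, l ≠ L → z l = 1 := by
    intro l hlL
    have h1 := hcoord l
    rw [hσfix l] at h1
    have h2 := hvneL l hlL
    have : z l * v l = 1 * v l := by rw [one_mul, ← h1]
    exact mul_right_cancel₀ h2 this
  have hzL : z L = 1 := by
    have h1 := hzprod
    rwa [Finset.prod_eq_single L (fun b _ hb => hz1 b hb)
      (fun h => absurd (Finset.mem_univ L) h)] at h1
  have hzall : ∀ l, z l = 1 := by
    intro l
    by_cases h : l = L
    · rw [h, hzL]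
    · exact hz1 l h
  have htone : (t : Matrix (Fin n) (Fin n) ℂ) = 1 := by
    ext k l
    rw [hentry, hσfix l, hzall l, Matrix.one_apply]
  have hfr : Module.finrank ℂ (fixSpace t) = n := by
    rw [fixSpace, htone, Matrix.mulVecLin_one, sub_self, LinearMap.ker_zero, finrank_top]
    simp
  rw [hfr] at hrank
  omega
end
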